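/- Let V = (F_2)^{n+d}, n ≥ 2, d ≥ 1, T_∘ ⊆ AGL(V,+) a practical hidden sum with U(T_∘) = Span{e_{n+1},…,e_{n+d}}, and λ ∈ GL(V,+). Then λ ∈ GL(V,+) ∩ GL(V,∘) if and only if λ has block form [[Λ₁, Λ₂],[0, Λ₃]] with Λ₁ ∈ GL_n(F_2), Λ₃ ∈ GL_d(F_2), Λ₂ ∈ (F_2)^{n×d} arbitrary, and B_x Λ₃ = Λ₁ B_{xλ} for all x ∈ V. -/
import Mathlib


open Matrix

/-- The block matrix `[[A, B],[C, D]]` with blocks of sizes `n` and `d`, as an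
`(n+d) × (n+d)` matrix. -/
def blockMat (n d : ℕ) (A : Matrix (Fin n) (Fin n) (ZMod 2))
    (B : Matrix (Fin n) (Fin d) (ZMod 2)) (C : Matrix (Fin d) (Fin n) (ZMod 2))
    (D : Matrix (Fin d) (Fin d) (ZMod 2)) :
    Matrix (Fin (n + d)) (Fin (n + d)) (ZMod 2) :=
  (Matrix.fromBlocks A B C D).submatrix finSumFinEquiv.symm finSumFinEquiv.symm

/-- Matrices agreeing on all `vecMul`s are equal. -/
lemma vecMul_ext {m p : ℕ} {A A' : Matrix (Fin m) (Fin p) (ZMod 2)}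
    (h : ∀ x : Fin m → ZMod 2, x ᵥ* A = x ᵥ* A') : A = A' := by
  ext i j
  have := congrFun (h (Pi.single i 1)) j
  simpa using this

lemma blockMat_mul {n d : ℕ} (A A' : Matrix (Fin n) (Fin n) (ZMod 2))
    (B B' : Matrix (Fin n) (Fin d) (ZMod 2)) (C C' : Matrix (Fin d) (Fin n) (ZMod 2))
    (D D' : Matrix (Fin d) (Fin d) (ZMod 2)) :
    blockMat n d A B C D * blockMat n d A' B' C' D' =
      blockMat n d (A * A' + B * C') (A * B' + B * D') (C * A' + D * C') (C * B' + D * D') := by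
  unfold blockMat
  rw [Matrix.submatrix_mul_equiv _ _ _ finSumFinEquiv.symm, Matrix.fromBlocks_multiply]

lemma blockMat_inj {n d : ℕ} {A A' : Matrix (Fin n) (Fin n) (ZMod 2)}
    {B B' : Matrix (Fin n) (Fin d) (ZMod 2)} {C C' : Matrix (Fin d) (Fin n) (ZMod 2)}
    {D D' : Matrix (Fin d) (Fin d) (ZMod 2)}
    (h : blockMat n d A B C D = blockMat n d A' B' C' D') :
    A = A' ∧ B = B' ∧ C = C' ∧ D = D' := by
  have h2 : Matrix.fromBlocks A B C D = Matrix.fromBlocks A' B' C' D' := by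
    have := congrArg
      (fun X : Matrix (Fin (n + d)) (Fin (n + d)) (ZMod 2) =>
        X.submatrix finSumFinEquiv finSumFinEquiv) h
    simpa [blockMat, Matrix.submatrix_submatrix, Equiv.symm_comp_self] using this
  rw [Matrix.fromBlocks_inj] at h2
  tauto

lemma blockMat_det {n d : ℕ} (A : Matrix (Fin n) (Fin n) (ZMod 2))
    (B : Matrix (Fin n) (Fin d) (ZMod 2)) (D : Matrix (Fin d) (Fin d) (ZMod 2)) :
    (blockMat n d A B 0 D).det = A.det * D.det := by
  rw [blockMat, Matrix.det_submatrix_equiv_self, Matrix.det_fromBlocks_zero₂₁]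

/-- For a practical hidden sum `T∘` with `U(T∘) = Span{e_{n+1},…,e_{n+d}}`
(so `τ_v : x ↦ x κ_v + v` with `κ_v = [[I_n, B_v],[0, I_d]]`), a map `f ∈ GL(V,+)` lies in
`GL(V,+) ∩ GL(V,∘)` iff it has block form `[[Λ₁, Λ₂],[0, Λ₃]]` with `Λ₁ ∈ GL_n(F₂)`,
`Λ₃ ∈ GL_d(F₂)`, `Λ₂` arbitrary, and `B_x Λ₃ = Λ₁ B_{x f}` for all `x ∈ V`.
(Here `x ∘ y = τ_y x` and maps act on row vectors on the right.) -/
theorem stmt19 (n d : ℕ) (hn : 2 ≤ n) (hd : 1 ≤ d)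
    (T : Subgroup (Equiv.Perm (Fin (n + d) → ZMod 2)))
    (haff : ∀ g ∈ T, ∃ (L : (Fin (n + d) → ZMod 2) ≃ₗ[ZMod 2] (Fin (n + d) → ZMod 2))
      (c : Fin (n + d) → ZMod 2), ∀ x, g x = L x + c)
    (hreg : ∀ x y : Fin (n + d) → ZMod 2,
      ∃! g : Equiv.Perm (Fin (n + d) → ZMod 2), g ∈ T ∧ g x = y)
    (hab : ∀ g ∈ T, ∀ h ∈ T, g * h = h * g)
    (helem : ∀ g ∈ T, g * g = 1)
    (τ : (Fin (n + d) → ZMod 2) → Equiv.Perm (Fin (n + d) → ZMod 2))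
    (hτmem : ∀ a, τ a ∈ T) (hτ0 : ∀ a, τ a 0 = a)
    (B : (Fin (n + d) → ZMod 2) → Matrix (Fin n) (Fin d) (ZMod 2))
    (hB : ∀ v x, τ v x = x ᵥ* blockMat n d 1 (B v) 0 1 + v)
    (hU : {v : Fin (n + d) → ZMod 2 | ∀ x, τ v x = x + v}
      = {v : Fin (n + d) → ZMod 2 | ∀ i : Fin (n + d), (i : ℕ) < n → v i = 0})
    (f : (Fin (n + d) → ZMod 2) ≃ₗ[ZMod 2] (Fin (n + d) → ZMod 2)) :
    (∀ x y, f (τ y x) = τ (f y) (f x)) ↔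
    (∃ (Λ₁ : Matrix (Fin n) (Fin n) (ZMod 2)) (Λ₂ : Matrix (Fin n) (Fin d) (ZMod 2))
        (Λ₃ : Matrix (Fin d) (Fin d) (ZMod 2)),
      IsUnit Λ₁.det ∧ IsUnit Λ₃.det ∧
      (∀ x, f x = x ᵥ* blockMat n d Λ₁ Λ₂ 0 Λ₃) ∧
      (∀ x : Fin (n + d) → ZMod 2, B x * Λ₃ = Λ₁ * B (f x))) := by
  classical
  set K : (Fin (n + d) → ZMod 2) → Matrix (Fin (n + d)) (Fin (n + d)) (ZMod 2) :=
    fun v => blockMat n d 1 (B v) 0 1 with hK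
  -- matrix of a linear map (row-vector convention)
  have matOf : ∀ g : (Fin (n + d) → ZMod 2) →ₗ[ZMod 2] (Fin (n + d) → ZMod 2),
      ∀ x, g x = x ᵥ* (Matrix.of fun i j => g (Pi.single i 1) j) := by
    intro g x
    have h1 : g x = ∑ i, x i • g (Pi.single i 1) := by
      conv_lhs => rw [← Finset.univ_sum_single x]
      rw [map_sum]
      refine Finset.sum_congr rfl fun i _ => ?_
      rw [← _root_.map_smul]
      congr 1
      rw [← Pi.single_smul, smul_eq_mul, mul_one]
    funext j
    rw [h1]
    simp [Matrix.vecMul, dotProduct, Finset.sum_apply]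
  set M : Matrix (Fin (n + d)) (Fin (n + d)) (ZMod 2) :=
    Matrix.of fun i j => f (Pi.single i 1) j with hM
  have fM : ∀ x, f x = x ᵥ* M := matOf f.toLinearMap
  have hUiff : ∀ v : Fin (n + d) → ZMod 2,
      (∀ x, τ v x = x + v) ↔ (∀ i : Fin (n + d), (i : ℕ) < n → v i = 0) :=
    fun v => Set.ext_iff.mp hU v
  constructor
  · intro h
    -- the commutation relation K y * M = M * K (f y)
    have hcomm : ∀ y, K y * M = M * K (f y) := by
      intro y
      apply vecMul_ext
      intro x
      have hxy := h x y
      rw [hB y x, hB (f y) (f x), map_add] at hxy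
      have h2 : f (x ᵥ* K y) = f x ᵥ* K (f y) := add_right_cancel hxy
      rw [fM (x ᵥ* K y), fM x, Matrix.vecMul_vecMul, Matrix.vecMul_vecMul] at h2
      exact h2
    -- f preserves U
    have hfU : ∀ y : Fin (n + d) → ZMod 2, (∀ i : Fin (n + d), (i : ℕ) < n → y i = 0) →
        ∀ i : Fin (n + d), (i : ℕ) < n → f y i = 0 := by
      intro y hy
      apply (hUiff (f y)).mp
      intro z
      have hx := h (f.symm z) y
      rw [(hUiff y).mpr hy (f.symm z), map_add, f.apply_symm_apply] at hx
      exact hx.symm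
    -- blocks of M
    set M' := M.submatrix (finSumFinEquiv : Fin n ⊕ Fin d ≃ Fin (n + d)) finSumFinEquiv with hM'
    have hMblock : blockMat n d M'.toBlocks₁₁ M'.toBlocks₁₂ M'.toBlocks₂₁ M'.toBlocks₂₂ = M := by
      rw [blockMat, Matrix.fromBlocks_toBlocks, hM', Matrix.submatrix_submatrix]
      simp [Equiv.self_comp_symm]
    have hΛ4 : M'.toBlocks₂₁ = 0 := by
      ext i j
      simp only [Matrix.toBlocks₂₁, hM', Matrix.submatrix_apply, Matrix.of_apply,
        finSumFinEquiv_apply_left, finSumFinEquiv_apply_right, hM, Matrix.zero_apply]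
      refine hfU (Pi.single (Fin.natAdd n i) 1) ?_ (Fin.castAdd d j) ?_
      · intro k hk
        apply Pi.single_eq_of_ne
        intro hkk
        rw [hkk] at hk
        simp only [Fin.coe_natAdd] at hk
        omega
      · simpa using j.is_lt
    rw [hΛ4] at hMblock
    refine ⟨M'.toBlocks₁₁, M'.toBlocks₁₂, M'.toBlocks₂₂, ?_, ?_, ?_, ?_⟩
    case refine_3 => intro x; rw [fM x, hMblock]
    case refine_4 =>
      intro y
      have hc := hcomm y
      rw [← hMblock, hK] at hc
      simp only [blockMat_mul, Matrix.one_mul, Matrix.mul_one, Matrix.zero_mul,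
        Matrix.mul_zero, add_zero, zero_add] at hc
      have h12 := (blockMat_inj hc).2.1
      -- h12 : Λ₂ + B y * Λ₃ = Λ₁ * B (f y) + Λ₂
      rw [add_comm (M'.toBlocks₁₂)] at h12
      exact add_right_cancel h12
    all_goals {
      -- invertibility
      have hMdet : IsUnit M.det := by
        set N : Matrix (Fin (n + d)) (Fin (n + d)) (ZMod 2) :=
          Matrix.of fun i j => f.symm (Pi.single i 1) j with hN
        have fN : ∀ x, f.symm x = x ᵥ* N := matOf f.symm.toLinearMap
        have hMN : M * N = 1 := by
          apply vecMul_ext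
          intro x
          rw [← Matrix.vecMul_vecMul, ← fM x, ← fN (f x), f.symm_apply_apply,
            Matrix.vecMul_one]
        exact Matrix.isUnit_det_of_right_inverse hMN
      rw [← hMblock, blockMat_det] at hMdet
      first
        | exact (IsUnit.mul_iff.mp hMdet).1
        | exact (IsUnit.mul_iff.mp hMdet).2
    }
  · rintro ⟨Λ₁, Λ₂, Λ₃, _, _, hfM, hrel⟩
    intro x y
    set Mb := blockMat n d Λ₁ Λ₂ 0 Λ₃ with hMb
    have key : K y * Mb = Mb * K (f y) := by
      rw [hK, hMb]
      simp only [blockMat_mul, Matrix.one_mul, Matrix.mul_one, Matrix.zero_mul,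
        Matrix.mul_zero, add_zero, zero_add]
      rw [hrel y, add_comm (Λ₁ * B (f y))]
    rw [hB y x, hB (f y) (f x), map_add]
    rw [hfM (x ᵥ* K y), hfM x, Matrix.vecMul_vecMul, Matrix.vecMul_vecMul]
    show x ᵥ* (K y * Mb) + f y = x ᵥ* (Mb * K (f y)) + f y
    rw [key]
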